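/- Let F be a field of characteristic not equal to 2, and let R = F[a,b,c,x,y,z] be a polynomial ring. Let I be the ideal of R generated by the 2×2 permanents of the matrix [[a,b,c],[x,y,z]], i.e., by ay+bx, az+cx, bz+cy. Then the monomial b·c·x belongs to I. -/
import Mathlib

open MvPolynomial

/-- Variables: a = X 0, b = X 1, c = X 2, x = X 3, y = X 4, z = X 5 in
`R = F[a,b,c,x,y,z]`.  The ideal `I` is generated by the 2×2 subpermanents
`ay+bx, az+cx, bz+cy` of the matrix `[[a,b,c],[x,y,z]]`.  Then `bcx ∈ I`. -/
theorem bcx_mem_permanental_ideal (F : Type*) [Field F] (h2 : (2 : F) ≠ 0) :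
    (X 1 * X 2 * X 3 : MvPolynomial (Fin 6) F) ∈
      Ideal.span {X 0 * X 4 + X 1 * X 3, X 0 * X 5 + X 2 * X 3,
        X 1 * X 5 + X 2 * X 4} := by
  have h1 : (X 0 * X 4 + X 1 * X 3 : MvPolynomial (Fin 6) F) ∈
      Ideal.span {X 0 * X 4 + X 1 * X 3, X 0 * X 5 + X 2 * X 3, X 1 * X 5 + X 2 * X 4} :=
    Ideal.subset_span (by simp)
  have hg2 : (X 0 * X 5 + X 2 * X 3 : MvPolynomial (Fin 6) F) ∈
      Ideal.span {X 0 * X 4 + X 1 * X 3, X 0 * X 5 + X 2 * X 3, X 1 * X 5 + X 2 * X 4} :=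
    Ideal.subset_span (by simp)
  have hg3 : (X 1 * X 5 + X 2 * X 4 : MvPolynomial (Fin 6) F) ∈
      Ideal.span {X 0 * X 4 + X 1 * X 3, X 0 * X 5 + X 2 * X 3, X 1 * X 5 + X 2 * X 4} :=
    Ideal.subset_span (by simp)
  have key : (X 1 * X 2 * X 3 : MvPolynomial (Fin 6) F) =
      C (2⁻¹ : F) * (X 2 * (X 0 * X 4 + X 1 * X 3) + X 1 * (X 0 * X 5 + X 2 * X 3)
        - X 0 * (X 1 * X 5 + X 2 * X 4)) := by
    have : (C (2⁻¹ : F) * C 2 : MvPolynomial (Fin 6) F) = 1 := by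
      rw [← C_mul, inv_mul_cancel₀ h2, C_1]
    ring_nf
    rw [(map_ofNat (C : F →+* MvPolynomial (Fin 6) F) 2).symm, mul_assoc (X 1 * X 2 * X 3), this, mul_one]
  rw [key]
  exact Ideal.mul_mem_left _ _
    (Ideal.sub_mem _ (Ideal.add_mem _ (Ideal.mul_mem_left _ _ h1) (Ideal.mul_mem_left _ _ hg2))
      (Ideal.mul_mem_left _ _ hg3))
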